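/- arXiv:1212.3176 — 3 statements merged into one kernel-verified Lean document; each statement's English description precedes it below -/
import Mathlib

section
/- Let Y be a set, C a compact Hausdorff space, and f : Y → C a map such that for any two disjoint closed subsets C₁, C₂ of C there is a set Y' in a fixed Boolean algebra B of subsets of Y with f⁻¹(C₁) ⊆ Y' and Y' ∩ f⁻¹(C₂) = ∅. Then f extends uniquely to a continuous map f* from the Stone space of B to C, where Y maps to the Stone space via principal ultrafilters, and f*(p) is the unique point in the intersection over Y' ∈ p of the closures of f(Y'). -/
/-- `B` is a Boolean algebra of subsets of `α`. -/
def IsBoolAlgOn {α : Type*} (B : Set (Set α)) : Prop :=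
  Set.univ ∈ B ∧ (∀ A ∈ B, Aᶜ ∈ B) ∧ ∀ A ∈ B, ∀ A' ∈ B, A ∩ A' ∈ B

/-- `p` is an ultrafilter on the Boolean algebra `B` of subsets. -/
def IsUltraOn {α : Type*} (B p : Set (Set α)) : Prop :=
  p ⊆ B ∧ Set.univ ∈ p ∧ ∅ ∉ p ∧ (∀ Y ∈ p, ∀ Z ∈ p, Y ∩ Z ∈ p) ∧
    (∀ Y ∈ p, ∀ Z ∈ B, Y ⊆ Z → Z ∈ p) ∧ ∀ Y ∈ B, Y ∈ p ∨ Yᶜ ∈ p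

/-- The Stone space of the Boolean algebra `B`: the set of ultrafilters on `B`. -/
abbrev StoneS {α : Type*} (B : Set (Set α)) : Type _ := {p : Set (Set α) // IsUltraOn B p}

/-- The Stone topology, generated by the basic (cl)open sets `{p : A ∈ p}`, `A ∈ B`. -/
instance stoneTop {α : Type*} (B : Set (Set α)) : TopologicalSpace (StoneS B) :=
  TopologicalSpace.generateFrom {U | ∃ A ∈ B, U = {p : StoneS B | A ∈ p.1}}

/-- `f : α → C` is `B`-definable: preimages of disjoint closed sets are separated by a
member of `B`. -/
def BDefinable {α C : Type*} [TopologicalSpace C] (B : Set (Set α)) (f : α → C) : Prop :=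
  ∀ C₁ C₂ : Set C, IsClosed C₁ → IsClosed C₂ → Disjoint C₁ C₂ →
    ∃ A ∈ B, f ⁻¹' C₁ ⊆ A ∧ A ∩ f ⁻¹' C₂ = ∅

namespace Stmt11

variable {α C : Type*} [TopologicalSpace C] [CompactSpace C] [T2Space C]
  (B : Set (Set α)) (f : α → C)

def K (p : Set (Set α)) : Set C := ⋂ A ∈ p, closure (f '' A)

lemma mem_nonempty {p : Set (Set α)} (hp : IsUltraOn B p) {A : Set α} (hA : A ∈ p) :
    A.Nonempty := by
  rcases A.eq_empty_or_nonempty with rfl | h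
  · exact absurd hA hp.2.2.1
  · exact h

lemma K_nonempty {p : Set (Set α)} (hp : IsUltraOn B p) : (K f p).Nonempty := by
  have : Nonempty {A // A ∈ p} := ⟨⟨Set.univ, hp.2.1⟩⟩
  have h := IsCompact.nonempty_iInter_of_directed_nonempty_isCompact_isClosed
    (fun A : {A // A ∈ p} => closure (f '' A.1)) ?_ ?_ ?_ ?_
  · rw [K, Set.biInter_eq_iInter]; exact h
  · intro A A'
    refine ⟨⟨A.1 ∩ A'.1, hp.2.2.2.1 _ A.2 _ A'.2⟩, ?_, ?_⟩ <;>
      exact closure_mono (Set.image_mono (by simp))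
  · intro A
    exact (Set.Nonempty.image f (mem_nonempty B hp A.2)).closure
  · intro A; exact isClosed_closure.isCompact
  · intro A; exact isClosed_closure

lemma mem_of_mem_K {p : Set (Set α)} {A : Set α} (hA : A ∈ p) {c : C} (hc : c ∈ K f p) :
    c ∈ closure (f '' A) := Set.mem_iInter₂.mp hc A hA

lemma K_subsingleton (hf : BDefinable B f) {p : Set (Set α)} (hp : IsUltraOn B p) :
    (K f p).Subsingleton := by
  intro c₁ h₁ c₂ h₂
  by_contra hne
  obtain ⟨U₁, U₂, hU₁, hU₂, hc₁, hc₂, hUd⟩ := t2_separation hne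
  obtain ⟨N₁, hN₁m, hN₁c, hN₁s⟩ := exists_mem_nhds_isClosed_subset (hU₁.mem_nhds hc₁)
  obtain ⟨N₂, hN₂m, hN₂c, hN₂s⟩ := exists_mem_nhds_isClosed_subset (hU₂.mem_nhds hc₂)
  obtain ⟨A, hAB, hA1, hA2⟩ := hf N₁ N₂ hN₁c hN₂c (hUd.mono hN₁s hN₂s)
  rcases hp.2.2.2.2.2 A hAB with hAp | hAp
  · have h := mem_of_mem_K f hAp h₂
    rw [mem_closure_iff] at h
    obtain ⟨x, hx1, hx2⟩ := h (interior N₂) isOpen_interior (mem_interior_iff_mem_nhds.mpr hN₂m)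
    obtain ⟨a, haA, rfl⟩ := hx2
    have : a ∈ A ∩ f ⁻¹' N₂ := ⟨haA, show f a ∈ N₂ from interior_subset hx1⟩
    rw [hA2] at this; exact this
  · have h := mem_of_mem_K f hAp h₁
    rw [mem_closure_iff] at h
    obtain ⟨x, hx1, hx2⟩ := h (interior N₁) isOpen_interior (mem_interior_iff_mem_nhds.mpr hN₁m)
    obtain ⟨a, haA, rfl⟩ := hx2
    exact haA (hA1 (show f a ∈ N₁ from interior_subset hx1))

noncomputable def F0 (p : StoneS B) : C := (K_nonempty B f p.2).some

lemma F0_mem (p : StoneS B) : F0 B f p ∈ K f p.1 := (K_nonempty B f p.2).some_mem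

lemma K_eq_singleton (hf : BDefinable B f) (p : StoneS B) : K f p.1 = {F0 B f p} :=
  (K_subsingleton B f hf p.2).eq_singleton_of_mem (F0_mem B f p)

lemma principal_ultra (hB : IsBoolAlgOn B) (y : α) : IsUltraOn B {A | A ∈ B ∧ y ∈ A} := by
  obtain ⟨huniv, hcompl, hinter⟩ := hB
  refine ⟨fun A hA => hA.1, ⟨huniv, trivial⟩, fun h => h.2, ?_, ?_, ?_⟩
  · intro Y hY Z hZ; exact ⟨hinter _ hY.1 _ hZ.1, hY.2, hZ.2⟩
  · intro Y hY Z hZ hYZ; exact ⟨hZ, hYZ hY.2⟩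
  · intro Y hY
    by_cases h : y ∈ Y
    · exact Or.inl ⟨hY, h⟩
    · exact Or.inr ⟨hcompl _ hY, h⟩

lemma F0_principal (hf : BDefinable B f) (y : α) (p : StoneS B)
    (hp : p.1 = {A | A ∈ B ∧ y ∈ A}) : F0 B f p = f y := by
  have hy : f y ∈ K f p.1 := by
    refine Set.mem_iInter₂.mpr fun A hA => subset_closure ⟨y, ?_, rfl⟩
    rw [hp] at hA; exact hA.2
  exact K_subsingleton B f hf p.2 (F0_mem B f p) hy

lemma gen_open {A : Set α} (hA : A ∈ B) : IsOpen {q : StoneS B | A ∈ q.1} :=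
  TopologicalSpace.isOpen_generateFrom_of_mem ⟨A, hA, rfl⟩

lemma F0_continuous (hf : BDefinable B f) : Continuous (F0 B f) := by
  rw [continuous_def]
  intro U hU
  rw [isOpen_iff_forall_mem_open]
  intro p hp
  obtain ⟨N, hNm, hNc, hNs⟩ := exists_mem_nhds_isClosed_subset (hU.mem_nhds hp)
  obtain ⟨N', hN'm, hN'c, hN's⟩ := exists_mem_nhds_isClosed_subset
    (isOpen_interior.mem_nhds (mem_interior_iff_mem_nhds.mpr hNm))
  obtain ⟨A, hAB, hA1, hA2⟩ := hf N' (interior N)ᶜ hN'c isOpen_interior.isClosed_compl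
    (Set.disjoint_left.mpr fun x hx hxc => hxc (hN's hx))
  have hAp : A ∈ p.1 := by
    by_contra h
    have hAc : Aᶜ ∈ p.1 := (p.2.2.2.2.2.2 A hAB).resolve_left h
    have hcl := mem_of_mem_K f hAc (F0_mem B f p)
    rw [mem_closure_iff] at hcl
    obtain ⟨x, hx1, hx2⟩ := hcl (interior N') isOpen_interior
      (mem_interior_iff_mem_nhds.mpr hN'm)
    obtain ⟨a, haA, rfl⟩ := hx2
    exact haA (hA1 (show f a ∈ N' from interior_subset hx1))
  refine ⟨{q : StoneS B | A ∈ q.1}, ?_, gen_open B hAB, hAp⟩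
  · intro q hq
    have h1 : F0 B f q ∈ closure (f '' A) := mem_of_mem_K f hq (F0_mem B f q)
    have h2 : f '' A ⊆ interior N := by
      rintro c ⟨a, ha, rfl⟩
      by_contra hc
      have : a ∈ A ∩ f ⁻¹' (interior N)ᶜ := ⟨ha, hc⟩
      rw [hA2] at this; exact this
    exact hNs (closure_minimal (h2.trans interior_subset) hNc h1)

lemma sInter_mem {p : Set (Set α)} (hp : IsUltraOn B p) {S : Set (Set α)} (hS : S.Finite) :
    S ⊆ p → ⋂₀ S ∈ p := by
  refine Set.Finite.induction_on (motive := fun S _ => S ⊆ p → ⋂₀ S ∈ p) S hS (fun _ => by simpa using hp.2.1) ?_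
  intro A S hA hSfin ih hsub
  rw [Set.sInter_insert]
  exact hp.2.2.2.1 _ (hsub (Set.mem_insert _ _)) _
    (ih fun t ht => hsub (Set.mem_insert_of_mem _ ht))

lemma dense_principal (hB : IsBoolAlgOn B) :
    Dense {p : StoneS B | ∃ y : α, p.1 = {A | A ∈ B ∧ y ∈ A}} := by
  rw [dense_iff_inter_open]
  rintro V hV ⟨p, hpV⟩
  have hbasis := TopologicalSpace.isTopologicalBasis_of_subbasis
    (rfl : stoneTop B = TopologicalSpace.generateFrom _)
  obtain ⟨W, hW, hpW, hWV⟩ := hbasis.exists_subset_of_mem_open hpV hV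
  obtain ⟨fs, ⟨hfsfin, hfssub⟩, rfl⟩ := hW
  have key : ∀ t ∈ fs, ∃ A, (A ∈ p.1 ∧ t = {q : StoneS B | A ∈ q.1}) := by
    intro t ht
    obtain ⟨A, hAB, rfl⟩ := hfssub ht
    exact ⟨A, hpW _ ht, rfl⟩
  choose! A hA1 hA2 using key
  have hmem : ⋂₀ (A '' fs) ∈ p.1 :=
    sInter_mem B p.2 (hfsfin.image A) (by rintro _ ⟨t, ht, rfl⟩; exact hA1 t ht)
  obtain ⟨y, hy⟩ := mem_nonempty B p.2 hmem
  refine ⟨⟨{A' | A' ∈ B ∧ y ∈ A'}, principal_ultra B hB y⟩, hWV ?_, y, rfl⟩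
  intro t ht
  rw [hA2 t ht]
  exact ⟨p.2.1 (hA1 t ht), hy _ (Set.mem_image_of_mem A ht)⟩

end Stmt11

/-- A `B`-definable map `f` from `Y` to a compact Hausdorff space `C` extends uniquely to
a continuous map on the Stone space of `B` (via principal ultrafilters), and the value of
any such extension at `p` is the unique point of `⋂_{A ∈ p} closure (f '' A)`. -/
theorem stmt_11 {α C : Type*} [TopologicalSpace C] [CompactSpace C] [T2Space C]
    (B : Set (Set α)) (hB : IsBoolAlgOn B) (f : α → C) (hf : BDefinable B f) :
    (∃! F : StoneS B → C, Continuous F ∧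
        ∀ (y : α) (p : StoneS B), p.1 = {A | A ∈ B ∧ y ∈ A} → F p = f y) ∧
      ∀ F : StoneS B → C, Continuous F →
        (∀ (y : α) (p : StoneS B), p.1 = {A | A ∈ B ∧ y ∈ A} → F p = f y) →
        ∀ p : StoneS B, ⋂ A ∈ p.1, closure (f '' A) = {F p} := by
  classical
  have hFc := Stmt11.F0_continuous B f hf
  have hFp := Stmt11.F0_principal B f hf
  have huniq : ∀ G : StoneS B → C, Continuous G →
      (∀ (y : α) (p : StoneS B), p.1 = {A | A ∈ B ∧ y ∈ A} → G p = f y) →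
      G = Stmt11.F0 B f := by
    intro G hGc hGp
    refine Continuous.ext_on (Stmt11.dense_principal B hB) hGc hFc ?_
    rintro p ⟨y, hy⟩
    rw [hGp y p hy, hFp y p hy]
  refine ⟨⟨Stmt11.F0 B f, ⟨hFc, hFp⟩, fun G hG => huniq G hG.1 hG.2⟩, ?_⟩
  intro G hGc hGp p
  rw [huniq G hGc hGp]
  exact Stmt11.K_eq_singleton B f hf p
end

section
/- With the setup of the previous extension result: if p is an ultrafilter on the Boolean algebra B of subsets of Y and f : Y → C is B-definable into the compact Hausdorff space C, then the intersection ⋂_{Y' ∈ p} closure(f(Y')) is a singleton. -/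
/-- For an ultrafilter `p` on `B` and a `B`-definable map `f` into a compact Hausdorff
space, the intersection `⋂_{A ∈ p} closure (f '' A)` is a singleton. -/
theorem stmt_12 {α C : Type*} [TopologicalSpace C] [CompactSpace C] [T2Space C]
    (B : Set (Set α)) (hB : IsBoolAlgOn B)
    (p : Set (Set α)) (hp : IsUltraOn B p)
    (f : α → C) (hf : BDefinable B f) :
    ∃ c : C, ⋂ A ∈ p, closure (f '' A) = {c} := by
  obtain ⟨hpB, hUniv, hEmpty, hInter, hUp, hUlt⟩ := hp
  haveI : Nonempty {A // A ∈ p} := ⟨⟨Set.univ, hUniv⟩⟩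
  have hne : (⋂ A ∈ p, closure (f '' A)).Nonempty := by
    rw [Set.biInter_eq_iInter]
    apply IsCompact.nonempty_iInter_of_directed_nonempty_isCompact_isClosed
    · rintro ⟨A, hA⟩ ⟨A', hA'⟩
      exact ⟨⟨A ∩ A', hInter A hA A' hA'⟩,
        closure_mono (Set.image_mono (f := f) Set.inter_subset_left),
        closure_mono (Set.image_mono (f := f) Set.inter_subset_right)⟩
    · rintro ⟨A, hA⟩
      have hAne : A.Nonempty := by
        rcases A.eq_empty_or_nonempty with h | h
        · exact absurd (h ▸ hA) hEmpty
        · exact h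
      exact (hAne.image f).closure
    · exact fun _ => isClosed_closure.isCompact
    · exact fun _ => isClosed_closure
  obtain ⟨c, hc⟩ := hne
  refine ⟨c, Set.eq_singleton_iff_unique_mem.mpr ⟨hc, ?_⟩⟩
  intro c' hc'
  by_contra hne'
  obtain ⟨U, V, hU, hV, hcU, hcV, hUV⟩ := t2_separation hne'
  obtain ⟨K₁, hK₁n, hK₁cl, hK₁U⟩ :=
    exists_mem_nhds_isClosed_subset (hU.mem_nhds hcU)
  obtain ⟨K₂, hK₂n, hK₂cl, hK₂V⟩ :=
    exists_mem_nhds_isClosed_subset (hV.mem_nhds hcV)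
  have hdisj : Disjoint K₂ K₁ :=
    Set.disjoint_of_subset hK₂V hK₁U hUV.symm
  obtain ⟨A, hAB, h1, h2⟩ := hf K₂ K₁ hK₂cl hK₁cl hdisj
  rcases hUlt A hAB with hAp | hAp
  · have hc'A : c' ∈ closure (f '' A) := Set.mem_iInter₂.mp hc' A hAp
    have hsub : closure (f '' A) ⊆ (interior K₁)ᶜ := by
      apply closure_minimal _ (isOpen_interior.isClosed_compl)
      rintro _ ⟨x, hx, rfl⟩ hfx
      exact Set.eq_empty_iff_forall_notMem.mp h2 x ⟨hx, show f x ∈ K₁ from interior_subset hfx⟩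
    exact hsub hc'A (mem_interior_iff_mem_nhds.mpr hK₁n)
  · have hcA : c ∈ closure (f '' Aᶜ) := Set.mem_iInter₂.mp hc Aᶜ hAp
    have hsub : closure (f '' Aᶜ) ⊆ (interior K₂)ᶜ := by
      apply closure_minimal _ (isOpen_interior.isClosed_compl)
      rintro _ ⟨x, hx, rfl⟩ hfx
      exact hx (h1 (show f x ∈ K₂ from interior_subset hfx))
    exact hsub hcA (mem_interior_iff_mem_nhds.mpr hK₂n)
end

section
/- Let G and H be groups with H carrying a compact Hausdorff topological group structure, B a Boolean algebra of subsets of G closed under left and right translations, and f : G → H a group homomorphism that is B-definable (for disjoint closed C₁, C₂ ⊆ H there is Y ∈ B separating f⁻¹(C₁) from f⁻¹(C₂)). Then the unique continuous extension f* : S(B) → H of f to the Stone space satisfies: for ultrafilters p, q on B, f*(p) · f*(q) equals the unique point of ⋂_{Y∈p, Z∈q} closure(f(Y·Z)), where Y·Z = {yz : y ∈ Y, z ∈ Z}. -/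
open Pointwise

/-- For a `B`-definable homomorphism `f : G → H` into a compact Hausdorff group, with `B`
closed under left and right translations, the continuous extension `F` to the Stone space
(given by `{F p} = ⋂_{A ∈ p} closure (f '' A)`) satisfies
`{F p * F q} = ⋂_{A ∈ p, Z ∈ q} closure (f '' (A·Z))`. -/
theorem stmt_13 {G H : Type*} [Group G] [Group H] [TopologicalSpace H] [IsTopologicalGroup H]
    [CompactSpace H] [T2Space H]
    (B : Set (Set G)) (hB : IsBoolAlgOn B)
    (hBl : ∀ (g : G), ∀ Y ∈ B, (g * ·) '' Y ∈ B)
    (hBr : ∀ (g : G), ∀ Y ∈ B, (· * g) '' Y ∈ B)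
    (f : G →* H) (hf : BDefinable B ⇑f)
    (F : StoneS B → H) (hFc : Continuous F)
    (hF : ∀ p : StoneS B, ⋂ A ∈ p.1, closure (⇑f '' A) = {F p}) :
    ∀ p q : StoneS B,
      (⋂ A ∈ p.1, ⋂ Z ∈ q.1, closure (⇑f '' (A * Z))) = {F p * F q} := by
  intro p q
  obtain ⟨hpB, hpu, hpe, hpi, hpm, hpo⟩ := p.2
  obtain ⟨hqB, hqu, hqe, hqi, hqm, hqo⟩ := q.2
  have key : ∀ A Z : Set G, closure (⇑f '' (A * Z)) = closure (⇑f '' A) * closure (⇑f '' Z) := by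
    intro A Z
    rw [Set.image_mul]
    apply subset_antisymm
    · apply closure_minimal (Set.mul_subset_mul subset_closure subset_closure)
      exact (IsCompact.mul isClosed_closure.isCompact isClosed_closure.isCompact).isClosed
    · rw [Set.mul_subset_iff]
      intro a ha b hb
      exact map_mem_closure₂ continuous_mul ha hb fun x hx y hy => Set.mul_mem_mul hx hy
  have hFp : ∀ A ∈ p.1, F p ∈ closure (⇑f '' A) := by
    intro A hA
    have : F p ∈ ⋂ A ∈ p.1, closure (⇑f '' A) := by rw [hF p]; rfl
    exact Set.mem_iInter₂.1 this A hA
  have hFq : ∀ Z ∈ q.1, F q ∈ closure (⇑f '' Z) := by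
    intro Z hZ
    have : F q ∈ ⋂ A ∈ q.1, closure (⇑f '' A) := by rw [hF q]; rfl
    exact Set.mem_iInter₂.1 this Z hZ
  apply Set.eq_singleton_iff_unique_mem.mpr
  constructor
  · refine Set.mem_iInter₂.2 fun A hA => Set.mem_iInter₂.2 fun Z hZ => ?_
    rw [key]
    exact Set.mul_mem_mul (hFp A hA) (hFq Z hZ)
  · intro x hx
    have hx' : ∀ A ∈ p.1, ∀ Z ∈ q.1, x ∈ closure (⇑f '' A) * closure (⇑f '' Z) := by
      intro A hA Z hZ
      rw [← key]
      exact Set.mem_iInter₂.1 (Set.mem_iInter₂.1 hx A hA) Z hZ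
    set ι := {A : Set G // A ∈ p.1} × {Z : Set G // Z ∈ q.1} with hι
    have : Nonempty ι := ⟨⟨⟨Set.univ, hpu⟩, ⟨Set.univ, hqu⟩⟩⟩
    set M : ι → Set (H × H) := fun i =>
      (closure (⇑f '' i.1.1) ×ˢ closure (⇑f '' i.2.1)) ∩ {y | y.1 * y.2 = x} with hM
    have hdir2 : Directed (· ⊇ ·) M := by
      rintro ⟨⟨A, hA⟩, ⟨Z, hZ⟩⟩ ⟨⟨A', hA'⟩, ⟨Z', hZ'⟩⟩
      refine ⟨⟨⟨A ∩ A', hpi A hA A' hA'⟩, ⟨Z ∩ Z', hqi Z hZ Z' hZ'⟩⟩,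
        fun y hy => ⟨⟨closure_mono (Set.image_mono Set.inter_subset_left) hy.1.1,
          closure_mono (Set.image_mono Set.inter_subset_left) hy.1.2⟩, hy.2⟩,
        fun y hy => ⟨⟨closure_mono (Set.image_mono Set.inter_subset_right) hy.1.1,
          closure_mono (Set.image_mono Set.inter_subset_right) hy.1.2⟩, hy.2⟩⟩
    have hne : ∀ i, (M i).Nonempty := by
      rintro ⟨⟨A, hA⟩, ⟨Z, hZ⟩⟩
      obtain ⟨a, ha, b, hb, hab⟩ := hx' A hA Z hZ
      exact ⟨(a, b), ⟨ha, hb⟩, hab⟩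
    have hcl : ∀ i, IsClosed (M i) := fun i =>
      ((isClosed_closure.prod isClosed_closure).inter
        (isClosed_eq (continuous_fst.mul continuous_snd) continuous_const))
    obtain ⟨⟨a, b⟩, hab⟩ :=
      IsCompact.nonempty_iInter_of_directed_nonempty_isCompact_isClosed M hdir2 hne
        (fun i => (hcl i).isCompact) hcl
    have hmem : ∀ i, (a, b) ∈ M i := Set.mem_iInter.1 hab
    have ha : a = F p := by
      have : a ∈ ⋂ A ∈ p.1, closure (⇑f '' A) :=
        Set.mem_iInter₂.2 fun A hA => (hmem ⟨⟨A, hA⟩, ⟨Set.univ, hqu⟩⟩).1.1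
      rw [hF p] at this; exact this
    have hb : b = F q := by
      have : b ∈ ⋂ Z ∈ q.1, closure (⇑f '' Z) :=
        Set.mem_iInter₂.2 fun Z hZ => (hmem ⟨⟨Set.univ, hpu⟩, ⟨Z, hZ⟩⟩).1.2
      rw [hF q] at this; exact this
    have := (hmem ⟨⟨Set.univ, hpu⟩, ⟨Set.univ, hqu⟩⟩).2
    simp only [Set.mem_setOf_eq] at this
    rw [← this, ha, hb]
end
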